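/- Let K = ℚ(√D) with D ≥ 2 squarefree, i ≥ -1 odd, and a, b ∈ ℤ. Then Nm(aα_i + bα_{i+1}) = (a - b/γ_{i+2})(b√Δ + aN_i - bN_i/γ_{i+2}), where α_i are the convergents, N_i = |Nm(α_i)|, Δ the discriminant, and γ_{i+2} the continued fraction tail. -/

import Mathlib

noncomputable section

/-- `ω_D`: the standard generator of the ring of integers of `ℚ(√D)`. -/
def omegaD (D : ℕ) : ℝ := if D % 4 = 1 then (1 + Real.sqrt D) / 2 else Real.sqrt D

/-- The Galois conjugate of `ω_D`. -/
def omegaD' (D : ℕ) : ℝ := if D % 4 = 1 then (1 - Real.sqrt D) / 2 else -Real.sqrt D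

/-- Elements of `O_K` in coordinates: `(x, y)` represents `x + y·ω_D`. -/
abbrev OK : Type := ℤ × ℤ

/-- First real embedding. -/
def emb1 (D : ℕ) (a : OK) : ℝ := a.1 + a.2 * omegaD D

/-- Second real embedding (Galois conjugate). -/
def emb2 (D : ℕ) (a : OK) : ℝ := a.1 + a.2 * omegaD' D

/-- Galois conjugation on `O_K`. -/
def conjOK (D : ℕ) (a : OK) : OK := (a.1 + (if D % 4 = 1 then (1 : ℤ) else 0) * a.2, -a.2)

/-- Total positivity. -/
def TotPos (D : ℕ) (a : OK) : Prop := 0 < emb1 D a ∧ 0 < emb2 D a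

/-- The field norm. -/
def Nm (D : ℕ) (a : OK) : ℝ := emb1 D a * emb2 D a

/-- Indecomposability: totally positive and not a sum of two totally positive elements. -/
def Indec (D : ℕ) (a : OK) : Prop :=
  TotPos D a ∧ ¬ ∃ b c : OK, TotPos D b ∧ TotPos D c ∧ a = b + c

/-- Number of partitions of `α` into indecomposable parts (`p_K(α|I)`). -/
def pKI (D : ℕ) (α : OK) : ℕ :=
  Set.ncard {s : Multiset OK | (∀ x ∈ s, Indec D x) ∧ s.sum = α}

/-- Number of partitions of `α` into totally positive parts (`p_K(α)`). -/
def pK (D : ℕ) (α : OK) : ℕ :=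
  Set.ncard {s : Multiset OK | (∀ x ∈ s, TotPos D x) ∧ s.sum = α}

/-- Discriminant of `ℚ(√D)`. -/
def disc (D : ℕ) : ℕ := if D % 4 = 1 then D else 4 * D

/-- The ordered two-sided sequence of indecomposables together with
the coefficients `v j ≥ 2` from the Hejda–Kala relation `v_j β_j = β_{j-1} + β_{j+1}`. -/
structure BetaSeq (D : ℕ) (β : ℤ → OK) (v : ℤ → ℤ) : Prop where
  indec : ∀ j, Indec D (β j)
  surj : ∀ a : OK, Indec D a → ∃ j, β j = a
  mono : StrictMono fun j => emb1 D (β j)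
  zero : β 0 = (1, 0)
  conj_eq : ∀ j, β (-j) = conjOK D (β j)
  v_two_le : ∀ j, 2 ≤ v j
  v_symm : ∀ j, v (-j) = v j
  rel : ∀ j, v j • β j = β (j - 1) + β (j + 1)

/-- The continued fraction data of `ω_D = [⌈u₀/2⌉, \overline{u₁, …, u_s}]` (with `u_s = u_0`),
with tails `γ_0 = ω_D`, `γ_i = [u_i, u_{i+1}, …]` for `i ≥ 1`. -/
structure CFData (D : ℕ) (u : ℕ → ℕ) (γ : ℕ → ℝ) : Prop where
  gamma_zero : γ 0 = omegaD D
  u_zero : (u 0 : ℤ) = 2 * ⌊omegaD D⌋ - (if D % 4 = 1 then 1 else 0)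
  head : omegaD D = (⌊omegaD D⌋ : ℝ) + 1 / γ 1
  step : ∀ i, 1 ≤ i → γ i = u i + 1 / γ (i + 1)
  one_lt : ∀ i, 1 ≤ i → 1 < γ i
  floor_eq : ∀ i, 1 ≤ i → (u i : ℤ) = ⌊γ i⌋
  period : ∃ s, 1 ≤ s ∧ u s = u 0 ∧ ∀ i, 1 ≤ i → u (i + s) = u i

/-- The convergents `α_i = p_i + q_i ξ_D`, indexed by `i ≥ -1`. -/
structure ConvData (D : ℕ) (u : ℕ → ℕ) (a : ℤ → OK) : Prop where
  neg_one : a (-1) = (1, 0)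
  zero : a 0 = (⌊omegaD D⌋, 0) + (if D % 4 = 1 then ((-1 : ℤ), (1 : ℤ)) else (0, 1))
  recur : ∀ i : ℤ, -1 ≤ i → a (i + 2) = (u (i + 2).toNat : ℤ) • a (i + 1) + a i

/-- Semiconvergents `α_{i,r} = α_i + r·α_{i+1}`. -/
def semiconv (a : ℤ → OK) (i r : ℤ) : OK := a i + r • a (i + 1)

namespace Stmt8Aux

lemma sqrt_disc (D : ℕ) : Real.sqrt (disc D) = omegaD D - omegaD' D := by
  unfold disc omegaD omegaD'
  split_ifs with h
  · ring
  · push_cast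
    rw [show ((4 : ℝ) * D) = 2 ^ 2 * (D : ℝ) by ring,
        Real.sqrt_mul (by positivity), Real.sqrt_sq (by norm_num)]
    ring

lemma emb_sub (D : ℕ) (b : OK) :
    emb1 D b - emb2 D b = b.2 * Real.sqrt (disc D) := by
  rw [sqrt_disc]; unfold emb1 emb2; ring

lemma emb1_comb (D : ℕ) (m : ℤ) (b c : OK) :
    emb1 D (m • b + c) = m * emb1 D b + emb1 D c := by
  unfold emb1
  simp only [Prod.fst_add, Prod.snd_add, Prod.smul_fst, Prod.smul_snd, smul_eq_mul]
  push_cast; ring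

lemma emb2_comb (D : ℕ) (m : ℤ) (b c : OK) :
    emb2 D (m • b + c) = m * emb2 D b + emb2 D c := by
  unfold emb2
  simp only [Prod.fst_add, Prod.snd_add, Prod.smul_fst, Prod.smul_snd, smul_eq_mul]
  push_cast; ring

lemma emb1_comb2 (D : ℕ) (m n : ℤ) (b c : OK) :
    emb1 D (m • b + n • c) = m * emb1 D b + n * emb1 D c := by
  unfold emb1
  simp only [Prod.fst_add, Prod.snd_add, Prod.smul_fst, Prod.smul_snd, smul_eq_mul]
  push_cast; ring

lemma emb2_comb2 (D : ℕ) (m n : ℤ) (b c : OK) :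
    emb2 D (m • b + n • c) = m * emb2 D b + n * emb2 D c := by
  unfold emb2
  simp only [Prod.fst_add, Prod.snd_add, Prod.smul_fst, Prod.smul_snd, smul_eq_mul]
  push_cast; ring

lemma one_lt_omega (D : ℕ) (hD : 2 ≤ D) : 1 < omegaD D := by
  have h2 : (1 : ℝ) < Real.sqrt D := by
    rw [show (1 : ℝ) = Real.sqrt 1 by simp]
    apply Real.sqrt_lt_sqrt (by norm_num)
    exact_mod_cast hD.trans_lt' (by norm_num)
  unfold omegaD
  split_ifs with h
  · linarith
  · exact h2

lemma floor_omega_pos (D : ℕ) (hD : 2 ≤ D) : 1 ≤ ⌊omegaD D⌋ :=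
  Int.le_floor.mpr (by exact_mod_cast (one_lt_omega D hD).le)

section Main

variable {D : ℕ} {u : ℕ → ℕ} {γ : ℕ → ℝ} {a : ℤ → OK}

lemma gamma_pos (hCF : CFData D u γ) {k : ℕ} (hk : 1 ≤ k) : 0 < γ k :=
  lt_trans one_pos (hCF.one_lt k hk)

lemma y_zero (hCF : CFData D u γ) (hconv : ConvData D u a) :
    emb2 D (a 0) = -(1 / γ 1) := by
  have hhead := hCF.head
  rw [hconv.zero]
  unfold emb2 omegaD omegaD' at *
  split_ifs at * with h
  · simp only [Prod.fst_add, Prod.snd_add]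
    push_cast
    linarith
  · simp only [Prod.fst_add, Prod.snd_add]
    push_cast
    linarith

/-- Key identity: `emb2 (a i) = -γ_{i+2} * emb2 (a (i+1))`. -/
lemma lemE (hCF : CFData D u γ) (hconv : ConvData D u a) :
    ∀ i : ℤ, -1 ≤ i → emb2 D (a i) = -γ (i + 2).toNat * emb2 D (a (i + 1)) := by
  refine Int.le_induction ?_ ?_
  ·
    have h1 : ((-1 : ℤ) + 2).toNat = 1 := rfl
    have hy0 := y_zero hCF hconv
    have hγ : γ 1 ≠ 0 := ne_of_gt (gamma_pos hCF le_rfl)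
    rw [h1, hconv.neg_one, show (-1 : ℤ) + 1 = 0 by ring, hy0]
    unfold emb2
    field_simp
    norm_num
  · intro n hn ih
    have hk1 : 1 ≤ (n + 2).toNat := by omega
    have hk2 : ((n + 1) + 2).toNat = (n + 2).toNat + 1 := by omega
    have hγ1 : γ (n + 2).toNat ≠ 0 := ne_of_gt (gamma_pos hCF hk1)
    have hγ2 : γ ((n + 2).toNat + 1) ≠ 0 := ne_of_gt (gamma_pos hCF (by omega))
    have hstep := hCF.step (n + 2).toNat hk1
    have hrec := hconv.recur n hn
    have hy2 : emb2 D (a (n + 2)) =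
        (u (n + 2).toNat : ℝ) * emb2 D (a (n + 1)) + emb2 D (a n) := by
      rw [hrec, emb2_comb]; push_cast; ring
    rw [hk2, show (n : ℤ) + 1 + 1 = n + 2 by ring, hy2, ih, hstep]
    field_simp
    ring

/-- Wronskian identity. -/
lemma lemW (hCF : CFData D u γ) (hconv : ConvData D u a) :
    ∀ i : ℤ, -1 ≤ i →
      emb1 D (a (i + 1)) * emb2 D (a i) - emb1 D (a i) * emb2 D (a (i + 1)) =
        (if Odd i then 1 else -1) * Real.sqrt (disc D) := by
  refine Int.le_induction ?_ ?_
  ·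
    have hodd : Odd (-1 : ℤ) := ⟨-1, by ring⟩
    rw [if_pos hodd, show (-1 : ℤ) + 1 = 0 by ring, hconv.neg_one]
    have h1 : emb1 D ((1, 0) : OK) = 1 := by unfold emb1; norm_num
    have h2 : emb2 D ((1, 0) : OK) = 1 := by unfold emb2; norm_num
    have h3 : ((a 0).2 : ℝ) = 1 := by
      rw [hconv.zero]; split_ifs <;> norm_num
    have := emb_sub D (a 0)
    rw [h3, one_mul] at this
    rw [h1, h2, one_mul]
    linarith
  · intro n hn ih
    have hrec := hconv.recur n hn
    have hx2 : emb1 D (a (n + 2)) =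
        (u (n + 2).toNat : ℝ) * emb1 D (a (n + 1)) + emb1 D (a n) := by
      rw [hrec, emb1_comb]; push_cast; ring
    have hy2 : emb2 D (a (n + 2)) =
        (u (n + 2).toNat : ℝ) * emb2 D (a (n + 1)) + emb2 D (a n) := by
      rw [hrec, emb2_comb]; push_cast; ring
    rw [show (n : ℤ) + 1 + 1 = n + 2 by ring, hx2, hy2]
    by_cases hodd : Odd n
    · rw [if_neg (by simp only [Int.odd_iff] at hodd ⊢; omega)]
      rw [if_pos hodd] at ih
      linear_combination -ih
    · rw [if_pos (by simp only [Int.odd_iff] at hodd ⊢; omega)]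
      rw [if_neg hodd] at ih
      linear_combination -ih

/-- Positivity of the embeddings, with sign of `emb2` alternating. -/
lemma lemPos (hD : 2 ≤ D) (hCF : CFData D u γ) (hconv : ConvData D u a) :
    ∀ i : ℤ, -1 ≤ i → 0 < emb1 D (a i) ∧ 0 < emb1 D (a (i + 1)) ∧
      0 < (if Odd i then emb2 D (a i) else -emb2 D (a i)) := by
  refine Int.le_induction ?_ ?_
  ·
    have h1 : emb1 D ((1, 0) : OK) = 1 := by unfold emb1; norm_num
    have h2 : emb2 D ((1, 0) : OK) = 1 := by unfold emb2; norm_num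
    have hodd : Odd (-1 : ℤ) := ⟨-1, by ring⟩
    refine ⟨by rw [hconv.neg_one, h1]; norm_num, ?_, ?_⟩
    · rw [show (-1 : ℤ) + 1 = 0 by ring, hconv.zero]
      have hω := one_lt_omega D hD
      have hfl := floor_omega_pos D hD
      have hfl' : (1 : ℝ) ≤ (⌊omegaD D⌋ : ℝ) := by exact_mod_cast hfl
      unfold emb1
      split_ifs with h
      · simp only [Prod.fst_add, Prod.snd_add]
        push_cast
        linarith
      · simp only [Prod.fst_add, Prod.snd_add]
        push_cast
        linarith
    · rw [if_pos hodd, hconv.neg_one, h2]; norm_num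
  · intro n hn ih
    obtain ⟨ih1, ih2, ih3⟩ := ih
    have hk1 : 1 ≤ (n + 2).toNat := by omega
    have hγpos : 0 < γ (n + 2).toNat := gamma_pos hCF hk1
    have hE := lemE hCF hconv n hn
    have hynext : emb2 D (a (n + 1)) = -emb2 D (a n) / γ (n + 2).toNat := by
      rw [hE]; field_simp
    have hrec := hconv.recur n hn
    have hx2 : emb1 D (a (n + 2)) =
        (u (n + 2).toNat : ℝ) * emb1 D (a (n + 1)) + emb1 D (a n) := by
      rw [hrec, emb1_comb]; push_cast; ring
    refine ⟨ih2, ?_, ?_⟩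
    · rw [show (n : ℤ) + 1 + 1 = n + 2 by ring, hx2]
      have : (0 : ℝ) ≤ (u (n + 2).toNat : ℝ) * emb1 D (a (n + 1)) :=
        mul_nonneg (Nat.cast_nonneg _) ih2.le
      linarith
    · by_cases hodd : Odd n
      · rw [if_neg (by simp only [Int.odd_iff] at hodd ⊢; omega), hynext]
        rw [if_pos hodd] at ih3
        rw [neg_div, neg_neg]
        exact div_pos ih3 hγpos
      · rw [if_pos (by simp only [Int.odd_iff] at hodd ⊢; omega), hynext]
        rw [if_neg hodd] at ih3
        exact div_pos ih3 hγpos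

end Main

end Stmt8Aux

/-- the norm formula `Nm(aα_i + bα_{i+1})
= (a - b/γ_{i+2})(b√Δ + aN_i - bN_i/γ_{i+2})`. -/
theorem stmt8 (D : ℕ) (hD : 2 ≤ D) (hsq : Squarefree D)
    (u : ℕ → ℕ) (γ : ℕ → ℝ) (hCF : CFData D u γ)
    (a : ℤ → OK) (hconv : ConvData D u a)
    (i : ℤ) (hi : -1 ≤ i) (hodd : Odd i) (A B : ℤ) :
    Nm D (A • a i + B • a (i + 1)) =
      ((A : ℝ) - B / γ (i + 2).toNat) *
        (B * Real.sqrt (disc D) + A * |Nm D (a i)| - B * |Nm D (a i)| / γ (i + 2).toNat) := by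
  have hk1 : 1 ≤ (i + 2).toNat := by omega
  have hγpos : 0 < γ (i + 2).toNat := Stmt8Aux.gamma_pos hCF hk1
  have hγne : γ (i + 2).toNat ≠ 0 := ne_of_gt hγpos
  have hE := Stmt8Aux.lemE hCF hconv i hi
  have hW := Stmt8Aux.lemW hCF hconv i hi
  rw [if_pos hodd, one_mul] at hW
  obtain ⟨hx, hx', hy⟩ := Stmt8Aux.lemPos hD hCF hconv i hi
  rw [if_pos hodd] at hy
  have habs : |Nm D (a i)| = emb1 D (a i) * emb2 D (a i) := by
    unfold Nm
    exact abs_of_pos (mul_pos hx hy)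
  have hlin : Nm D (A • a i + B • a (i + 1)) =
      (A * emb1 D (a i) + B * emb1 D (a (i + 1))) *
        (A * emb2 D (a i) + B * emb2 D (a (i + 1))) := by
    unfold Nm
    rw [Stmt8Aux.emb1_comb2, Stmt8Aux.emb2_comb2]
  rw [hlin, habs, ← hW, hE]
  field_simp
  ring
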